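/- Let q = 2^n. The number of K ∈ F_q \ {0,1} such that U² + U = 1/(K+1) has a solution U ∈ F_q equals (q−4)/2 if n is even and (q−2)/2 if n is odd; equivalently, it equals (q − 2·gcd(n,2))/2. -/

import Mathlib

lemma aux_three_dvd (n : ℕ) : 3 ∣ 2 ^ n - 1 ↔ Even n := by
  constructor
  · intro h
    by_contra hodd
    rw [Nat.not_even_iff_odd] at hodd
    obtain ⟨m, rfl⟩ := hodd
    have h4 : (3:ℕ) ∣ 4 ^ m - 1 := by simpa using Nat.sub_dvd_pow_sub_pow 4 1 m
    have h1 : 1 ≤ 4 ^ m := Nat.one_le_pow _ _ (by norm_num)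
    have h2 : (2:ℕ) ^ (2 * m + 1) = 2 * 4 ^ m := by
      rw [pow_succ, pow_mul]; ring
    obtain ⟨a, ha⟩ := h
    obtain ⟨b, hb⟩ := h4
    rw [h2] at ha
    generalize (4:ℕ) ^ m = A at ha hb h1
    omega
  · rintro ⟨m, rfl⟩
    have h4 : (3:ℕ) ∣ 4 ^ m - 1 := by simpa using Nat.sub_dvd_pow_sub_pow 4 1 m
    have h2 : (2:ℕ) ^ (m + m) = 4 ^ m := by
      rw [← two_mul, pow_mul]; norm_num
    rw [h2]
    exact h4

/-- For `q = 2^n`, the number of `K ∈ F_q \ {0,1}` such that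
`U² + U = 1/(K+1)` has a solution `U ∈ F_q` equals `(q − 2·gcd(n,2))/2`. -/
theorem stmt14 (n q : ℕ) (hn : 0 < n) (hq : q = 2 ^ n)
    (F : Type*) [Field F] [Fintype F] (hF : Fintype.card F = q) :
    Nat.card {k : F | k ≠ 0 ∧ k ≠ 1 ∧ ∃ u : F, u ^ 2 + u = 1 / (k + 1)} =
      (q - 2 * Nat.gcd n 2) / 2 := by
  -- characteristic 2
  classical
  have hr : (ringChar F).Prime := CharP.char_is_prime F (ringChar F)
  obtain ⟨m, hm, hcard⟩ := FiniteField.card F (ringChar F)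
  have hr2 : ringChar F = 2 := by
    have hd : ringChar F ∣ 2 ^ n := by
      rw [← hq, ← hF, hcard]
      exact dvd_pow_self _ (by positivity)
    have := hr.dvd_of_dvd_pow hd
    exact (Nat.prime_dvd_prime_iff_eq hr Nat.prime_two).mp this
  haveI hchar : CharP F 2 := hr2 ▸ ringChar.charP F
  have h2 : (2:F) = 0 := CharTwo.two_eq_zero
  -- the additive homomorphism u ↦ u² + u
  set φ : F →+ F :=
    { toFun := fun u => u ^ 2 + u
      map_zero' := by simp
      map_add' := fun a b => by
        linear_combination (a * b) * h2 } with hφ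
  set R : Set F := Set.range (fun u : F => u ^ 2 + u) with hR
  have hRrange : (φ.range : Set F) = R := rfl
  have hRfin : R.Finite := Set.toFinite R
  -- kernel is {0, 1}
  have hker : (φ.ker : Set F) = {0, 1} := by
    ext u
    simp only [SetLike.mem_coe, AddMonoidHom.mem_ker, Set.mem_insert_iff,
      Set.mem_singleton_iff]
    show u ^ 2 + u = 0 ↔ _
    constructor
    · intro h
      have : u * (u + 1) = 0 := by linear_combination h
      rcases mul_eq_zero.mp this with h' | h'
      · exact Or.inl h'
      · exact Or.inr (by linear_combination h' - h2)
    · rintro (rfl | rfl)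
      · simp
      · show (1:F) ^ 2 + 1 = 0
        linear_combination h2
  have hkercard : Nat.card φ.ker = 2 := by
    have : Nat.card φ.ker = Nat.card ({0, 1} : Set F) :=
      Nat.card_congr (Equiv.setCongr hker)
    rw [this, Nat.card_coe_set_eq, Set.ncard_pair (zero_ne_one (α := F))]
  -- |R| * 2 = q
  have hRcard : R.ncard * 2 = q := by
    have hq1 : Nat.card F = Nat.card (F ⧸ φ.ker) * Nat.card φ.ker :=
      AddSubgroup.card_eq_card_quotient_mul_card_addSubgroup φ.ker
    have hq2 : Nat.card (F ⧸ φ.ker) = Nat.card φ.range :=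
      Nat.card_congr (QuotientAddGroup.quotientKerEquivRange φ).toEquiv
    have hq3 : Nat.card φ.range = R.ncard := by
      rw [← Nat.card_coe_set_eq]
      exact Nat.card_congr (Equiv.setCongr hRrange)
    rw [hq2, hq3, hkercard] at hq1
    rw [← hq1, Nat.card_eq_fintype_card, hF]
  have h0R : (0:F) ∈ R := ⟨0, by simp⟩
  -- 1 ∈ R ↔ Even n
  have h1R : (1:F) ∈ R ↔ Even n := by
    rw [← aux_three_dvd n, ← hq]
    constructor
    · rintro ⟨u, hu⟩
      simp only at hu
      have hu0 : u ≠ 0 := by rintro rfl; simp at hu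
      have hu1 : u ≠ 1 := by
        rintro rfl
        exact one_ne_zero (α := F) (by linear_combination hu)
      have hcube : u ^ 3 = 1 := by linear_combination (u - 1) * hu + (u - 1) * h2
      set x : Fˣ := Units.mk0 u hu0 with hx
      have hx3 : x ^ 3 = 1 := by
        ext; push_cast [hx]; exact hcube
      have hdvd := orderOf_dvd_of_pow_eq_one hx3
      have hox : orderOf x = 3 := by
        rcases (Nat.prime_three.eq_one_or_self_of_dvd _ hdvd) with h | h
        · exfalso
          have : x = 1 := orderOf_eq_one_iff.mp h
          apply hu1
          have := congrArg (Units.val) this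
          simpa [hx] using this
        · exact h
      have := orderOf_dvd_card (x := x)
      rw [hox, Fintype.card_units, hF] at this
      exact this
    · intro h3
      obtain ⟨g, hg⟩ := IsCyclic.exists_ofOrder_eq_natCard (α := Fˣ)
      have hcardu : Nat.card Fˣ = q - 1 := by
        rw [Nat.card_eq_fintype_card, Fintype.card_units, hF]
      rw [hcardu] at hg
      have hq2 : 2 ≤ q := by
        rw [hq]; calc 2 = 2 ^ 1 := by norm_num
        _ ≤ 2 ^ n := Nat.pow_le_pow_right (by norm_num) hn
      have hne : orderOf g ≠ 0 := by omega
      have h3' : 3 ∣ orderOf g := hg ▸ h3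
      have hox : orderOf (g ^ (orderOf g / 3)) = 3 :=
        orderOf_pow_orderOf_div hne h3'
      set x := g ^ (orderOf g / 3) with hxdef
      have hx1 : x ≠ 1 := by
        intro h; rw [h, orderOf_one] at hox; omega
      have hx3 : x ^ 3 = 1 := by rw [← hox]; exact pow_orderOf_eq_one x
      set u : F := (x : F) with hu
      have hu3 : u ^ 3 = 1 := by
        rw [hu, ← Units.val_pow_eq_pow_val, hx3, Units.val_one]
      have hu1 : u ≠ 1 := by
        intro h
        exact hx1 (Units.ext (by simpa [hu] using h))
      have hne0 : u + 1 ≠ 0 := by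
        intro h
        exact hu1 (by linear_combination h - h2)
      have hfac : (u + 1) * (u ^ 2 + u + 1) = 0 := by
        linear_combination hu3 + (u ^ 2 + u + 1) * h2
      rcases mul_eq_zero.mp hfac with h | h
      · exact absurd h hne0
      · exact ⟨u, by linear_combination h - h2⟩
  -- reduce the main set to a preimage of R \ {0,1}
  have hinj : Function.Injective (fun k : F => (k + 1)⁻¹) :=
    fun a b hab => by
      have := inv_injective hab
      exact add_right_cancel this
  have hsurj : Function.Surjective (fun k : F => (k + 1)⁻¹) := by
    intro c
    exact ⟨c⁻¹ + 1, by
      simp only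
      rw [add_assoc, show (1:F) + 1 = 0 by linear_combination h2, add_zero,
        inv_inv]⟩
  have hset : {k : F | k ≠ 0 ∧ k ≠ 1 ∧ ∃ u : F, u ^ 2 + u = 1 / (k + 1)} =
      (fun k : F => (k + 1)⁻¹) ⁻¹' (R \ {0, 1}) := by
    ext k
    simp only [Set.mem_setOf_eq, Set.mem_preimage, Set.mem_diff,
      Set.mem_insert_iff, Set.mem_singleton_iff, hR, Set.mem_range]
    have e1 : k + 1 = 0 ↔ k = 1 := by
      constructor
      · intro h; linear_combination h - h2
      · intro h; linear_combination h + h2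
    have e2 : (k + 1)⁻¹ = 0 ↔ k = 1 := by rw [inv_eq_zero, e1]
    have e3 : (k + 1)⁻¹ = 1 ↔ k = 0 := by
      rw [inv_eq_one]
      constructor
      · intro h; linear_combination h
      · intro h; linear_combination h
    constructor
    · rintro ⟨hk0, hk1, u, hu⟩
      refine ⟨⟨u, by rw [hu, one_div]⟩, ?_⟩
      rw [e2, e3]
      tauto
    · rintro ⟨⟨u, hu⟩, hne⟩
      rw [e2, e3] at hne
      push_neg at hne
      exact ⟨hne.2, hne.1, u, by rw [hu, one_div]⟩
  rw [Nat.card_coe_set_eq, hset,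
    Set.ncard_preimage_of_injective_subset_range hinj
      (by rw [Set.range_eq_univ.mpr hsurj]; exact Set.subset_univ _)]
  rcases Nat.even_or_odd n with he | ho
  · -- n even
    have h1 : (1:F) ∈ R := h1R.mpr he
    have hsub : ({0, 1} : Set F) ⊆ R := by
      intro x hx
      rcases hx with rfl | hx
      · exact h0R
      · rw [Set.mem_singleton_iff] at hx; subst hx; exact h1
    rw [Set.ncard_diff hsub, Set.ncard_pair (zero_ne_one (α := F))]
    have hg : Nat.gcd n 2 = 2 := Nat.gcd_eq_right (even_iff_two_dvd.mp he)
    omega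
  · -- n odd
    have h1 : (1:F) ∉ R := fun h => (Nat.not_even_iff_odd.mpr ho) (h1R.mp h)
    have hdiffeq : R \ {0, 1} = R \ {0} := by
      ext x
      simp only [Set.mem_diff, Set.mem_insert_iff, Set.mem_singleton_iff]
      constructor
      · rintro ⟨hx, hne⟩; exact ⟨hx, fun h => hne (Or.inl h)⟩
      · rintro ⟨hx, hne⟩
        refine ⟨hx, ?_⟩
        rintro (rfl | rfl)
        · exact hne rfl
        · exact h1 hx
    rw [hdiffeq, Set.ncard_diff_singleton_of_mem h0R]
    have hg : Nat.gcd n 2 = 1 := by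
      rw [Nat.gcd_comm]
      exact Nat.Coprime.gcd_eq_one (Nat.coprime_two_left.mpr ho)
    omega
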